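/- arXiv:1106.1700 — 6 statements merged into one kernel-verified Lean document; each statement's English description precedes it below -/
import Mathlib

section
/- Let c : ℝ → ℝ be twice continuously differentiable with c(x) > 0 for all x, and let u : ℝ × ℝ → ℝ be twice continuously differentiable and satisfy ∂ₜu + ∂ₓ(c(x)·u) = 0 everywhere. Fix t ∈ ℝ, Δt > 0, and let x(·) solve x'(s) = c(x(s)) with x(Δt) = x_k, and set y_k = x(0). Then u(t + Δt, x_k) = (c(y_k)/c(x_k))·u(t, y_k), and ∂ₓu(t + Δt, x_k) = (c'(y_k)/c(x_k) − c'(x_k)/c(x_k))·(c(y_k)/c(x_k))·u(t, y_k) + (c(y_k)/c(x_k))²·∂ₓu(t, y_k). -/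
private lemma clm_decomp (L : ℝ × ℝ →L[ℝ] ℝ) (x y : ℝ) :
    L (x, y) = x * L (1, 0) + y * L (0, 1) := by
  have h : (x, y) = x • ((1:ℝ), (0:ℝ)) + y • ((0:ℝ), (1:ℝ)) := by
    simp [Prod.ext_iff]
  rw [h, map_add, map_smul, map_smul, smul_eq_mul, smul_eq_mul]

private lemma hasDerivAt_fst (F : ℝ × ℝ → ℝ) (hF : Differentiable ℝ F) (a b : ℝ) :
    HasDerivAt (fun s => F (s, b)) (fderiv ℝ F (a, b) (1, 0)) a := by
  have h1 : HasDerivAt (fun s : ℝ => (s, b)) ((1:ℝ), (0:ℝ)) a :=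
    (hasDerivAt_id a).prodMk (hasDerivAt_const _ _)
  exact (hF (a, b)).hasFDerivAt.comp_hasDerivAt a h1

private lemma hasDerivAt_snd (F : ℝ × ℝ → ℝ) (hF : Differentiable ℝ F) (a b : ℝ) :
    HasDerivAt (fun y => F (a, y)) (fderiv ℝ F (a, b) (0, 1)) b := by
  have h1 : HasDerivAt (fun y : ℝ => (a, y)) ((0:ℝ), (1:ℝ)) b :=
    (hasDerivAt_const _ _).prodMk (hasDerivAt_id b)
  exact (hF (a, b)).hasFDerivAt.comp_hasDerivAt b h1

/-- Exact update formula for the conservation law `u_t + (c(x)u)_x = 0`: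
along the backward characteristic with foot `y_k = x(0)` and head `x_k = x(Δt)`,
`u(t+Δt, x_k) = (c(y_k)/c(x_k)) u(t, y_k)` and
`u_x(t+Δt, x_k) = (c'(y_k)/c(x_k) − c'(x_k)/c(x_k)) (c(y_k)/c(x_k)) u(t, y_k)
  + (c(y_k)/c(x_k))² u_x(t, y_k)`. -/
theorem stmt_1 (c : ℝ → ℝ) (hc : ContDiff ℝ 2 c) (hcpos : ∀ x, 0 < c x)
    (u : ℝ → ℝ → ℝ) (hu : ContDiff ℝ 2 (Function.uncurry u))
    (hpde : ∀ t x, deriv (fun s => u s x) t + deriv (fun y => c y * u t y) x = 0)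
    (t Δt : ℝ) (hΔt : 0 < Δt)
    (X : ℝ → ℝ) (hX : ∀ s, HasDerivAt X (c (X s)) s)
    (xk yk : ℝ) (hxk : X Δt = xk) (hyk : yk = X 0) :
    u (t + Δt) xk = (c yk / c xk) * u t yk ∧
    deriv (fun x => u (t + Δt) x) xk =
      (deriv c yk / c xk - deriv c xk / c xk) * (c yk / c xk) * u t yk
        + (c yk / c xk) ^ 2 * deriv (fun x => u t x) yk := by
  have hUd : Differentiable ℝ (Function.uncurry u) := hu.differentiable (by norm_num)
  have hcd : Differentiable ℝ c := hc.differentiable (by norm_num)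
  set U : ℝ × ℝ → ℝ := Function.uncurry u with hUdef
  -- partial derivative functions
  set V : ℝ × ℝ → ℝ := fun p => fderiv ℝ U p (0, 1) with hVdef
  set W : ℝ × ℝ → ℝ := fun p => fderiv ℝ U p (1, 0) with hWdef
  have hV1 : ContDiff ℝ 1 V := (hu.fderiv_right (by norm_num)).clm_apply contDiff_const
  have hW1 : ContDiff ℝ 1 W := (hu.fderiv_right (by norm_num)).clm_apply contDiff_const
  have hVd : Differentiable ℝ V := hV1.differentiable one_ne_zero
  have hWd : Differentiable ℝ W := hW1.differentiable one_ne_zero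
  -- derivative of c : use B := deriv c, which is C¹
  have hBeq : deriv c = fun x => fderiv ℝ c x 1 := by
    funext x; rw [fderiv_apply_one_eq_deriv]
  have hB1 : ContDiff ℝ 1 (deriv c) := by
    rw [hBeq]; exact (hc.fderiv_right (by norm_num)).clm_apply contDiff_const
  have hBd : Differentiable ℝ (deriv c) := hB1.differentiable one_ne_zero
  -- section derivatives of u
  have hux : ∀ a b, HasDerivAt (fun y => u a y) (V (a, b)) b := fun a b =>
    hasDerivAt_snd U hUd a b
  have hut : ∀ a b, HasDerivAt (fun s => u s b) (W (a, b)) a := fun a b =>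
    hasDerivAt_fst U hUd a b
  -- the PDE, rewritten
  have hpde' : ∀ a x, W (a, x) = -(deriv c x * u a x + c x * V (a, x)) := by
    intro a x
    have h1 : HasDerivAt (fun y => c y * u a y) (deriv c x * u a x + c x * V (a, x)) x :=
      (hcd x).hasDerivAt.mul (hux a x)
    have h2 := hpde a x
    rw [(hut a x).deriv, h1.deriv] at h2
    linarith
  -- derivative along the characteristic path
  have pathD : ∀ (F : ℝ × ℝ → ℝ), Differentiable ℝ F → ∀ s : ℝ,
      HasDerivAt (fun s' => F (t + s', X s'))
        (fderiv ℝ F (t + s, X s) (1, 0) + c (X s) * fderiv ℝ F (t + s, X s) (0, 1)) s := by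
    intro F hF s
    have hp : HasDerivAt (fun s' : ℝ => (t + s', X s')) ((1:ℝ), c (X s)) s := by
      have h0 : HasDerivAt (fun s' : ℝ => t + s') (0 + 1) s :=
        (hasDerivAt_const s t).add (hasDerivAt_id s)
      simpa using h0.prodMk (hX s)
    have h2 := (hF (t + s, X s)).hasFDerivAt.comp_hasDerivAt s hp
    have h3 : fderiv ℝ F (t + s, X s) ((1:ℝ), c (X s))
        = fderiv ℝ F (t + s, X s) (1, 0) + c (X s) * fderiv ℝ F (t + s, X s) (0, 1) := by
      rw [clm_decomp]; ring
    rw [h3] at h2; exact h2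
  -- derivative of c ∘ X and (deriv c) ∘ X
  have hcX : ∀ s, HasDerivAt (fun s' => c (X s')) (deriv c (X s) * c (X s)) s := fun s =>
    (hcd (X s)).hasDerivAt.comp s (hX s)
  have hBX : ∀ s, HasDerivAt (fun s' => deriv c (X s')) (deriv (deriv c) (X s) * c (X s)) s :=
    fun s => (hBd (X s)).hasDerivAt.comp s (hX s)
  -- first invariant: K1 = c(X) * u(t+s, X s)
  have hK1 : ∀ s : ℝ, HasDerivAt (fun s' => c (X s') * u (t + s') (X s')) 0 s := by
    intro s
    have hU' : HasDerivAt (fun s' => u (t + s') (X s'))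
        (W (t + s, X s) + c (X s) * V (t + s, X s)) s := pathD U hUd s
    have h := (hcX s).mul hU'
    have hval : deriv c (X s) * c (X s) * u (t + s) (X s)
        + c (X s) * (W (t + s, X s) + c (X s) * V (t + s, X s)) = 0 := by
      rw [hpde' (t + s) (X s)]; ring
    rw [hval] at h; exact h
  have hE1 : c xk * u (t + Δt) xk = c yk * u t yk := by
    have h := is_const_of_deriv_eq_zero (f := fun s' => c (X s') * u (t + s') (X s'))
      (fun s => (hK1 s).differentiableAt) (fun s => (hK1 s).deriv) Δt 0
    rw [← hxk, hyk]
    simpa using h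
  -- second derivative machinery
  have hDU : Differentiable ℝ (fderiv ℝ U) :=
    (hu.fderiv_right (m := 1) (by norm_num)).differentiable one_ne_zero
  have hVfd : ∀ (p : ℝ × ℝ) (w : ℝ × ℝ),
      fderiv ℝ V p w = fderiv ℝ (fderiv ℝ U) p w (0, 1) := by
    intro p w
    have h := ((ContinuousLinearMap.apply ℝ ℝ ((0:ℝ), (1:ℝ))).hasFDerivAt
        (x := fderiv ℝ U p)).comp p (hDU p).hasFDerivAt
    have h2 : fderiv ℝ V p = (ContinuousLinearMap.apply ℝ ℝ ((0:ℝ), (1:ℝ))).comp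
        (fderiv ℝ (fderiv ℝ U) p) := h.fderiv
    rw [h2]; rfl
  have hWfd : ∀ (p : ℝ × ℝ) (w : ℝ × ℝ),
      fderiv ℝ W p w = fderiv ℝ (fderiv ℝ U) p w (1, 0) := by
    intro p w
    have h := ((ContinuousLinearMap.apply ℝ ℝ ((1:ℝ), (0:ℝ))).hasFDerivAt
        (x := fderiv ℝ U p)).comp p (hDU p).hasFDerivAt
    have h2 : fderiv ℝ W p = (ContinuousLinearMap.apply ℝ ℝ ((1:ℝ), (0:ℝ))).comp
        (fderiv ℝ (fderiv ℝ U) p) := h.fderiv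
    rw [h2]; rfl
  have hsym : ∀ p : ℝ × ℝ, IsSymmSndFDerivAt ℝ U p := fun p =>
    hu.contDiffAt.isSymmSndFDerivAt (by simp)
  -- the PDE differentiated in x
  have hVpde : ∀ a b, fderiv ℝ V (a, b) (1, 0) =
      -(deriv (deriv c) b * u a b + 2 * deriv c b * V (a, b)
        + c b * fderiv ℝ V (a, b) (0, 1)) := by
    intro a b
    have hWx : HasDerivAt (fun x => W (a, x)) (fderiv ℝ V (a, b) (1, 0)) b := by
      have h := hasDerivAt_snd W hWd a b
      have e : fderiv ℝ W (a, b) (0, 1) = fderiv ℝ V (a, b) (1, 0) := by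
        rw [hWfd, hVfd, hsym (a, b) (0, 1) (1, 0)]
      rwa [e] at h
    have hrhs : HasDerivAt (fun x => -(deriv c x * u a x + c x * V (a, x)))
        (-((deriv (deriv c) b * u a b + deriv c b * V (a, b))
          + (deriv c b * V (a, b) + c b * fderiv ℝ V (a, b) (0, 1)))) b :=
      (((hBd b).hasDerivAt.mul (hux a b)).add
        ((hcd b).hasDerivAt.mul (hasDerivAt_snd V hVd a b))).neg
    have heq : (fun x => W (a, x)) = fun x => -(deriv c x * u a x + c x * V (a, x)) :=
      funext (hpde' a)
    rw [heq] at hWx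
    have h := hWx.unique hrhs
    rw [h]; ring
  -- second invariant
  have hK2 : ∀ s : ℝ, HasDerivAt (fun s' =>
      c (X s') ^ 2 * V (t + s', X s')
        + c (X s') * deriv c (X s') * u (t + s') (X s')) 0 s := by
    intro s
    have hU' : HasDerivAt (fun s' => u (t + s') (X s'))
        (W (t + s, X s) + c (X s) * V (t + s, X s)) s := pathD U hUd s
    have hV' : HasDerivAt (fun s' => V (t + s', X s'))
        (fderiv ℝ V (t + s, X s) (1, 0) + c (X s) * fderiv ℝ V (t + s, X s) (0, 1)) s :=
      pathD V hVd s
    have h := (((hcX s).pow 2).mul hV').add (((hcX s).mul (hBX s)).mul hU')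
    refine h.congr_deriv ?_
    simp only [Pi.pow_apply, Pi.mul_apply]
    rw [hVpde (t + s) (X s), hpde' (t + s) (X s)]
    push_cast
    ring
  have hE2 : c xk ^ 2 * V (t + Δt, xk) + c xk * deriv c xk * u (t + Δt) xk
      = c yk ^ 2 * V (t, yk) + c yk * deriv c yk * u t yk := by
    have h := is_const_of_deriv_eq_zero (f := fun s' =>
        c (X s') ^ 2 * V (t + s', X s') + c (X s') * deriv c (X s') * u (t + s') (X s'))
      (fun s => (hK2 s).differentiableAt) (fun s => (hK2 s).deriv) Δt 0
    rw [← hxk, hyk]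
    simpa using h
  -- conclusion
  have hcx := (hcpos xk).ne'
  have hfirst : u (t + Δt) xk = c yk / c xk * u t yk := by
    field_simp
    linear_combination hE1
  refine ⟨hfirst, ?_⟩
  have e1 : deriv (fun x => u (t + Δt) x) xk = V (t + Δt, xk) :=
    (hasDerivAt_snd U hUd (t + Δt) xk).deriv
  have e2 : deriv (fun x => u t x) yk = V (t, yk) :=
    (hasDerivAt_snd U hUd t yk).deriv
  rw [e1, e2]
  field_simp
  linear_combination hE2 - deriv c xk * hE1
end

section
/- Let c : ℝ → ℝ be continuously differentiable with c(x) > 0 for all x, and let u : ℝ × ℝ → ℝ be twice continuously differentiable and satisfy the transport equation ∂ₜu(t,x) + c(x)·∂ₓu(t,x) = 0 everywhere. Fix t ∈ ℝ, Δt > 0, let x(·) solve x'(s) = c(x(s)) with x(Δt) = x_k, and set y_k = x(0). Then u(t + Δt, x_k) = u(t, y_k) and ∂ₓu(t + Δt, x_k) = (c(y_k)/c(x_k))·∂ₓu(t, y_k). -/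
/-- Exact update formula for the transport equation `u_t + c(x)u_x = 0`:
along the backward characteristic with foot `y_k = x(0)` and head `x_k = x(Δt)`,
`u(t+Δt, x_k) = u(t, y_k)` and `u_x(t+Δt, x_k) = (c(y_k)/c(x_k)) u_x(t, y_k)`. -/
theorem stmt_2 (c : ℝ → ℝ) (hc : ContDiff ℝ 1 c) (hcpos : ∀ x, 0 < c x)
    (u : ℝ → ℝ → ℝ) (hu : ContDiff ℝ 2 (Function.uncurry u))
    (hpde : ∀ t x, deriv (fun s => u s x) t + c x * deriv (fun y => u t y) x = 0)
    (t Δt : ℝ) (hΔt : 0 < Δt)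
    (X : ℝ → ℝ) (hX : ∀ s, HasDerivAt X (c (X s)) s)
    (xk yk : ℝ) (hxk : X Δt = xk) (hyk : yk = X 0) :
    u (t + Δt) xk = u t yk ∧
    deriv (fun x => u (t + Δt) x) xk = (c yk / c xk) * deriv (fun x => u t x) yk := by
  have hF1 : ContDiff ℝ 1 (Function.uncurry u) := hu.of_le one_le_two
  have hFd : Differentiable ℝ (Function.uncurry u) := hF1.differentiable one_ne_zero
  set G := fderiv ℝ (Function.uncurry u) with hGdef
  have hG1 : ContDiff ℝ 1 G := hu.fderiv_right (by norm_num)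
  have hGd : Differentiable ℝ G := hG1.differentiable one_ne_zero
  -- partial derivatives
  have hA : ∀ a b : ℝ, HasDerivAt (fun s => u s b) (G (a, b) ((1:ℝ), (0:ℝ))) a := by
    intro a b
    have h1 : HasDerivAt (fun s : ℝ => (s, b)) ((1:ℝ), (0:ℝ)) a :=
      HasDerivAt.prodMk (hasDerivAt_id a) (hasDerivAt_const a b)
    exact (hFd (a, b)).hasFDerivAt.comp_hasDerivAt a h1
  have hB : ∀ a b : ℝ, HasDerivAt (fun y => u a y) (G (a, b) ((0:ℝ), (1:ℝ))) b := by
    intro a b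
    have h1 : HasDerivAt (fun y : ℝ => (a, y)) ((0:ℝ), (1:ℝ)) b :=
      HasDerivAt.prodMk (hasDerivAt_const b a) (hasDerivAt_id b)
    exact (hFd (a, b)).hasFDerivAt.comp_hasDerivAt b h1
  have hut : ∀ a b : ℝ, G (a, b) ((1:ℝ), (0:ℝ)) = -(c b * G (a, b) ((0:ℝ), (1:ℝ))) := by
    intro a b
    have h := hpde a b
    rw [(hA a b).deriv, (hB a b).deriv] at h
    linarith
  -- characteristic curve
  have hγ : ∀ s : ℝ, HasDerivAt (fun s => (t + s, X s)) ((1:ℝ), c (X s)) s := by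
    intro s
    exact HasDerivAt.prodMk ((hasDerivAt_id s).const_add t) (hX s)
  have hsplit : ∀ s : ℝ, ((1:ℝ), c (X s)) = ((1:ℝ), (0:ℝ)) + c (X s) • ((0:ℝ), (1:ℝ)) := by
    intro s; simp [Prod.ext_iff]
  -- Part 1
  have hg : ∀ s : ℝ, HasDerivAt (fun s => u (t + s) (X s)) 0 s := by
    intro s
    have h1 := (hFd (t + s, X s)).hasFDerivAt.comp_hasDerivAt s (hγ s)
    have h2 : G (t + s, X s) ((1:ℝ), c (X s)) = 0 := by
      rw [hsplit s, map_add, map_smul, hut]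
      simp
    rw [h2] at h1
    exact h1
  have hconst1 : u (t + Δt) (X Δt) = u (t + 0) (X 0) :=
    is_const_of_deriv_eq_zero (fun s => (hg s).differentiableAt) (fun s => (hg s).deriv) Δt 0
  have part1 : u (t + Δt) xk = u t yk := by
    rw [← hxk, hyk]
    simpa using hconst1
  refine ⟨part1, ?_⟩
  -- Part 2
  have hsym : ∀ p : ℝ × ℝ, ∀ v w, fderiv ℝ G p v w = fderiv ℝ G p w v := by
    intro p v w
    exact (hu.contDiffAt).isSymmSndFDerivAt (by norm_num) v w
  have hGx : ∀ a b : ℝ, HasDerivAt (fun y => G (a, y)) (fderiv ℝ G (a, b) ((0:ℝ), (1:ℝ))) b := by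
    intro a b
    have h1 : HasDerivAt (fun y : ℝ => (a, y)) ((0:ℝ), (1:ℝ)) b :=
      HasDerivAt.prodMk (hasDerivAt_const b a) (hasDerivAt_id b)
    exact (hGd (a, b)).hasFDerivAt.comp_hasDerivAt b h1
  -- differentiate the PDE in x
  have hpdex : ∀ a b : ℝ, fderiv ℝ G (a, b) ((0:ℝ), (1:ℝ)) ((1:ℝ), (0:ℝ)) =
      -(deriv c b * G (a, b) ((0:ℝ), (1:ℝ)) +
        c b * fderiv ℝ G (a, b) ((0:ℝ), (1:ℝ)) ((0:ℝ), (1:ℝ))) := by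
    intro a b
    have hL : HasDerivAt (fun y => G (a, y) ((1:ℝ), (0:ℝ)))
        (fderiv ℝ G (a, b) ((0:ℝ), (1:ℝ)) ((1:ℝ), (0:ℝ))) b := by
      simpa using (hGx a b).clm_apply (hasDerivAt_const b ((1:ℝ), (0:ℝ)))
    have hGx' : HasDerivAt (fun y => G (a, y) ((0:ℝ), (1:ℝ)))
        (fderiv ℝ G (a, b) ((0:ℝ), (1:ℝ)) ((0:ℝ), (1:ℝ))) b := by
      simpa using (hGx a b).clm_apply (hasDerivAt_const b ((0:ℝ), (1:ℝ)))
    have hcd : HasDerivAt c (deriv c b) b := (hc.differentiable one_ne_zero b).hasDerivAt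
    have hR : HasDerivAt (fun y => -(c y * G (a, y) ((0:ℝ), (1:ℝ))))
        (-(deriv c b * G (a, b) ((0:ℝ), (1:ℝ)) +
          c b * fderiv ℝ G (a, b) ((0:ℝ), (1:ℝ)) ((0:ℝ), (1:ℝ)))) b :=
      (hcd.mul hGx').neg
    have heq : (fun y => G (a, y) ((1:ℝ), (0:ℝ))) =
        (fun y => -(c y * G (a, y) ((0:ℝ), (1:ℝ)))) := by
      funext y; exact hut a y
    rw [heq] at hL
    exact hL.unique hR
  -- the quantity c(X s) * u_x(t+s, X s) is constant along the characteristic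
  have hh : ∀ s : ℝ, HasDerivAt (fun s => c (X s) * G (t + s, X s) ((0:ℝ), (1:ℝ))) 0 s := by
    intro s
    have h1 : HasDerivAt (fun s => c (X s)) (deriv c (X s) * c (X s)) s :=
      ((hc.differentiable one_ne_zero (X s)).hasDerivAt).comp s (hX s)
    have hGγ : HasDerivAt (fun s => G (t + s, X s))
        (fderiv ℝ G (t + s, X s) ((1:ℝ), c (X s))) s :=
      (hGd (t + s, X s)).hasFDerivAt.comp_hasDerivAt s (hγ s)
    have h2 : HasDerivAt (fun s => G (t + s, X s) ((0:ℝ), (1:ℝ)))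
        (fderiv ℝ G (t + s, X s) ((1:ℝ), c (X s)) ((0:ℝ), (1:ℝ))) s := by
      simpa using hGγ.clm_apply (hasDerivAt_const s ((0:ℝ), (1:ℝ)))
    have h3 := h1.mul h2
    have h4 : deriv c (X s) * c (X s) * G (t + s, X s) ((0:ℝ), (1:ℝ)) +
        c (X s) * fderiv ℝ G (t + s, X s) ((1:ℝ), c (X s)) ((0:ℝ), (1:ℝ)) = 0 := by
      rw [hsym, hsplit s, map_add, map_smul, hpdex]
      simp only [smul_eq_mul]
      ring
    rw [h4] at h3
    exact h3
  have hconst2 : c (X Δt) * G (t + Δt, X Δt) ((0:ℝ), (1:ℝ)) =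
      c (X 0) * G (t + 0, X 0) ((0:ℝ), (1:ℝ)) :=
    is_const_of_deriv_eq_zero (fun s => (hh s).differentiableAt) (fun s => (hh s).deriv) Δt 0
  rw [(hB (t + Δt) xk).deriv, (hB t yk).deriv]
  rw [hxk] at hconst2
  rw [hyk]
  have hck : c xk ≠ 0 := ne_of_gt (hcpos xk)
  rw [add_zero] at hconst2
  field_simp
  linarith [hconst2]
end

section
/- Let c ∈ ℝ, Δx > 0, Δt > 0, and let u₀ : ℝ → ℝ be four times differentiable with |u₀⁗(x)| ≤ M for all x ∈ ℝ. Define u(t,x) = u₀(x − ct) (the exact solution of u_t + c·u_x = 0), grid points x_k = k·Δx for k ∈ ℤ, and suppose ℓ ∈ ℤ and λ ∈ [0,1] satisfy c·Δt = (ℓ + λ)·Δx. Then for every n ∈ ℕ and k ∈ ℤ, writing j = k − ℓ, U^n_m = u(nΔt, x_m) and V^n_m = ∂ₓu(nΔt, x_m) = u₀'(x_m − cnΔt), each component of the vector (U^{n+1}_k, Δx·V^{n+1}_k)ᵀ − A(λ)·(U^n_j, Δx·V^n_j)ᵀ − B(λ)·(U^n_{j−1}, Δx·V^n_{j−1})ᵀ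 has absolute value at most M·(Δx)⁴. -/
set_option maxHeartbeats 1000000

open Set

lemma iDW_eq {f : ℝ → ℝ} {n : ℕ} (hf : ContDiff ℝ (n : ℕ∞) f) {m : ℕ} (hm : m ≤ n)
    {s : Set ℝ} (hs : UniqueDiffOn ℝ s) {x : ℝ} (hx : x ∈ s) :
    iteratedDerivWithin m f s x = iteratedDeriv m f x := by
  have h0 : HasFTaylorSeriesUpTo (n : ℕ∞) f (ftaylorSeries ℝ f) :=
    contDiff_iff_ftaylorSeries.mp (by exact_mod_cast hf)
  have h2 := (h0.hasFTaylorSeriesUpToOn s).eq_iteratedFDerivWithin_of_uniqueDiffOn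
    (m := m) (by exact_mod_cast hm) hs hx
  have h3 := h0.eq_iteratedFDeriv (m := m) (by exact_mod_cast hm) x
  rw [iteratedDerivWithin, iteratedDeriv, ← h2, h3]

/-- Taylor remainder bound for the 3rd-order expansion of `f` at `a - h`. -/
lemma taylor3_bound {f : ℝ → ℝ} (hf : ContDiff ℝ 4 f) {M : ℝ}
    (hM : ∀ x, |iteratedDeriv 4 f x| ≤ M) {h : ℝ} (hh : 0 < h) (a : ℝ)
    {x : ℝ} (hx : x ∈ Icc (a - h) a) :
    |f x - (f (a - h) + deriv f (a - h) * (x - (a - h))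
        + iteratedDeriv 2 f (a - h) / 2 * (x - (a - h)) ^ 2
        + iteratedDeriv 3 f (a - h) / 6 * (x - (a - h)) ^ 3)|
      ≤ M * (x - (a - h)) ^ 4 / 6 := by
  set b := a - h with hb
  have hba : b ≤ a := by simp [hb]; linarith
  have hUD : UniqueDiffOn ℝ (Icc b a) := uniqueDiffOn_Icc (by simp [hb]; linarith)
  have hbmem : b ∈ Icc b a := ⟨le_rfl, hba⟩
  have hf4 : ContDiff ℝ ((4 : ℕ) : ℕ∞) f := by exact_mod_cast hf
  have hfOn : ContDiffOn ℝ ((3 : ℕ) + 1) f (Icc b a) := by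
    exact_mod_cast hf.contDiffOn
  have hC : ∀ y ∈ Icc b a, ‖iteratedDerivWithin (3 + 1) f (Icc b a) y‖ ≤ M := by
    intro y hy
    rw [show (3 + 1) = 4 from rfl, iDW_eq hf4 le_rfl hUD hy, Real.norm_eq_abs]
    exact hM y
  have hbd := taylor_mean_remainder_bound (n := 3) hba hfOn hx hC
  have hTay : taylorWithinEval f 3 (Icc b a) b x
      = f b + deriv f b * (x - b) + iteratedDeriv 2 f b / 2 * (x - b) ^ 2
        + iteratedDeriv 3 f b / 6 * (x - b) ^ 3 := by
    rw [taylor_within_apply]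
    have e0 := iDW_eq hf4 (by norm_num : (0:ℕ) ≤ 4) hUD hbmem
    have e1 := iDW_eq hf4 (by norm_num : (1:ℕ) ≤ 4) hUD hbmem
    have e2 := iDW_eq hf4 (by norm_num : (2:ℕ) ≤ 4) hUD hbmem
    have e3 := iDW_eq hf4 (by norm_num : (3:ℕ) ≤ 4) hUD hbmem
    simp [Finset.sum_range_succ, e0, e1, e2, e3, iteratedDeriv_zero, iteratedDeriv_one,
      Nat.factorial]
    ring
  rw [hTay, Real.norm_eq_abs] at hbd
  norm_num [Nat.factorial] at hbd
  convert hbd using 2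

/-- Taylor remainder bound for the 2nd-order expansion of `deriv f` at `a - h`. -/
lemma taylor2_deriv_bound {f : ℝ → ℝ} (hf : ContDiff ℝ 4 f) {M : ℝ}
    (hM : ∀ x, |iteratedDeriv 4 f x| ≤ M) {h : ℝ} (hh : 0 < h) (a : ℝ)
    {x : ℝ} (hx : x ∈ Icc (a - h) a) :
    |deriv f x - (deriv f (a - h) + iteratedDeriv 2 f (a - h) * (x - (a - h))
        + iteratedDeriv 3 f (a - h) / 2 * (x - (a - h)) ^ 2)|
      ≤ M * (x - (a - h)) ^ 3 / 2 := by
  set b := a - h with hb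
  have hba : b ≤ a := by simp [hb]; linarith
  have hUD : UniqueDiffOn ℝ (Icc b a) := uniqueDiffOn_Icc (by simp [hb]; linarith)
  have hbmem : b ∈ Icc b a := ⟨le_rfl, hba⟩
  have hg : ContDiff ℝ 3 (deriv f) := by
    have := (contDiff_succ_iff_deriv.mp (show ContDiff ℝ (3 + 1) f by exact_mod_cast hf)).2.2
    exact this
  have hg3 : ContDiff ℝ ((3 : ℕ) : ℕ∞) (deriv f) := by exact_mod_cast hg
  have hfOn : ContDiffOn ℝ ((2 : ℕ) + 1) (deriv f) (Icc b a) := by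
    exact_mod_cast hg.contDiffOn
  have hC : ∀ y ∈ Icc b a, ‖iteratedDerivWithin (2 + 1) (deriv f) (Icc b a) y‖ ≤ M := by
    intro y hy
    rw [show (2 + 1) = 3 from rfl, iDW_eq hg3 le_rfl hUD hy, Real.norm_eq_abs,
      ← iteratedDeriv_succ']
    exact hM y
  have hbd := taylor_mean_remainder_bound (n := 2) hba hfOn hx hC
  have hTay : taylorWithinEval (deriv f) 2 (Icc b a) b x
      = deriv f b + iteratedDeriv 2 f b * (x - b)
        + iteratedDeriv 3 f b / 2 * (x - b) ^ 2 := by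
    rw [taylor_within_apply]
    have e0 := iDW_eq hg3 (by norm_num : (0:ℕ) ≤ 3) hUD hbmem
    have e1 := iDW_eq hg3 (by norm_num : (1:ℕ) ≤ 3) hUD hbmem
    have e2 := iDW_eq hg3 (by norm_num : (2:ℕ) ≤ 3) hUD hbmem
    have d1 : iteratedDeriv 1 (deriv f) b = iteratedDeriv 2 f b := by
      rw [← iteratedDeriv_succ']
    have d2 : iteratedDeriv 2 (deriv f) b = iteratedDeriv 3 f b := by
      rw [← iteratedDeriv_succ']
    simp [Finset.sum_range_succ, e0, e1, e2, d1, d2, iteratedDeriv_zero, iteratedDeriv_one,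
      Nat.factorial]
    ring
  rw [hTay, Real.norm_eq_abs] at hbd
  norm_num [Nat.factorial] at hbd
  convert hbd using 2

/-- Core consistency estimate for the CIP scheme on one cell. -/
lemma cip_aux1 {s : ℝ} (hs0 : 0 ≤ s) (hs1 : s ≤ 1) : |(1-s)^2*(1+2*s)| ≤ 1 := by
  rw [abs_of_nonneg (by nlinarith)]; nlinarith [sq_nonneg s, sq_nonneg (1-s)]

lemma cip_aux2 {s : ℝ} (hs0 : 0 ≤ s) (hs1 : s ≤ 1) : |(-((1-s)^2*s))| ≤ 1/4 := by
  rw [abs_neg, abs_of_nonneg (by nlinarith)]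
  nlinarith [sq_nonneg (1 - 2*s), sq_nonneg s, sq_nonneg (1-s)]

lemma cip_aux3 {s : ℝ} (hs0 : 0 ≤ s) (hs1 : s ≤ 1) : |(1-s)*(1-3*s)| ≤ 1 := by
  rw [abs_le]; constructor <;> nlinarith [sq_nonneg s, sq_nonneg (1-s), sq_nonneg (1-2*s)]

lemma cip_aux4 {s : ℝ} (hs0 : 0 ≤ s) (hs1 : s ≤ 1) : |6*s*(1-s)| = 6*s*(1-s) :=
  abs_of_nonneg (by nlinarith)

lemma cip_aux5 {M h s : ℝ} (hM0 : 0 ≤ M) (hh : 0 < h) (hs0 : 0 ≤ s) (hs1 : s ≤ 1) :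
    M * (1-s)^3 * h^4 / 2 + s*(1-s) * (M * h^4) + M * h^4 / 2 ≤ M * h^4 := by
  have hMh4 : 0 ≤ M * h ^ 4 := mul_nonneg hM0 (by positivity)
  have h1 : (0:ℝ) ≤ 1 - s + s^2 := by nlinarith [sq_nonneg s]
  nlinarith [mul_nonneg hMh4 (mul_nonneg hs0 h1)]

lemma cip_aux6 {M h s : ℝ} (hM0 : 0 ≤ M) (hh : 0 < h) (hs0 : 0 ≤ s) (hs1 : s ≤ 1) :
    M * ((1-s)*h)^4 / 6 ≤ M * h^4 / 6 := by
  have hsh : 0 ≤ (1-s)*h := mul_nonneg (by linarith) hh.le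
  have hsh' : (1-s)*h ≤ h := by nlinarith
  have : ((1-s)*h)^4 ≤ h^4 := pow_le_pow_left₀ hsh hsh' 4
  nlinarith

lemma cip_key (f : ℝ → ℝ) (hf : ContDiff ℝ 4 f) (M : ℝ)
    (hM : ∀ x, |iteratedDeriv 4 f x| ≤ M) (h : ℝ) (hh : 0 < h)
    (s : ℝ) (hs0 : 0 ≤ s) (hs1 : s ≤ 1) (a : ℝ) :
    |f (a - s*h) - ((1-s)^2*(1+2*s) * f a + -((1-s)^2*s) * (h * deriv f a)
        + (s^2*(3-2*s) * f (a-h) + s^2*(1-s) * (h * deriv f (a-h))))| ≤ M * h^4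
    ∧
    |h * deriv f (a - s*h) - (6*s*(1-s) * f a + (1-s)*(1-3*s) * (h * deriv f a)
        + (-(6*s*(1-s)) * f (a-h) + (3*s-2)*s * (h * deriv f (a-h))))| ≤ M * h^4 := by
  have hM0 : 0 ≤ M := le_trans (abs_nonneg _) (hM 0)
  have hMh4 : 0 ≤ M * h ^ 4 := mul_nonneg hM0 (by positivity)
  have hx1 : a - s*h ∈ Icc (a - h) a := by
    have h1 : s * h ≤ h := by nlinarith
    have h2 : 0 ≤ s * h := mul_nonneg hs0 hh.le
    exact ⟨by linarith, by linarith⟩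
  have hamem : a ∈ Icc (a - h) a := ⟨by linarith, le_rfl⟩
  -- Taylor bounds at the two evaluation points
  have T1 := taylor3_bound hf hM hh a hx1
  have T2 := taylor3_bound hf hM hh a hamem
  have T3 := taylor2_deriv_bound hf hM hh a hx1
  have T4 := taylor2_deriv_bound hf hM hh a hamem
  rw [show a - s*h - (a - h) = (1-s)*h by ring] at T1 T3
  rw [show a - (a - h) = h by ring] at T2 T4
  obtain ⟨X, hX, hXb⟩ : ∃ X : ℝ, f (a - s*h) = X + (f (a-h) + deriv f (a-h) * ((1-s)*h)
      + iteratedDeriv 2 f (a-h)/2 * ((1-s)*h)^2 + iteratedDeriv 3 f (a-h)/6 * ((1-s)*h)^3)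
      ∧ |X| ≤ M * ((1-s)*h)^4 / 6 := ⟨_, by ring, T1⟩
  obtain ⟨Y, hY, hYb⟩ : ∃ Y : ℝ, f a = Y + (f (a-h) + deriv f (a-h) * h
      + iteratedDeriv 2 f (a-h)/2 * h^2 + iteratedDeriv 3 f (a-h)/6 * h^3)
      ∧ |Y| ≤ M * h^4 / 6 := ⟨_, by ring, T2⟩
  obtain ⟨Z1, hZ1, hZ1b⟩ : ∃ Z1 : ℝ, deriv f (a - s*h) = Z1 + (deriv f (a-h)
      + iteratedDeriv 2 f (a-h) * ((1-s)*h) + iteratedDeriv 3 f (a-h)/2 * ((1-s)*h)^2)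
      ∧ |Z1| ≤ M * ((1-s)*h)^3 / 2 := ⟨_, by ring, T3⟩
  obtain ⟨Z, hZ, hZb⟩ : ∃ Z : ℝ, deriv f a = Z + (deriv f (a-h)
      + iteratedDeriv 2 f (a-h) * h + iteratedDeriv 3 f (a-h)/2 * h^2)
      ∧ |Z| ≤ M * h^3 / 2 := ⟨_, by ring, T4⟩
  have hX' : |X| ≤ M * h^4 / 6 := hXb.trans (cip_aux6 hM0 hh hs0 hs1)
  have tri : ∀ p q r : ℝ, |p - q - r| ≤ |p| + |q| + |r| := fun p q r =>
    (abs_sub _ _).trans (add_le_add_left (abs_sub p q) _)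
  constructor
  · -- first component
    have key : f (a - s*h) - ((1-s)^2*(1+2*s) * f a + -((1-s)^2*s) * (h * deriv f a)
        + (s^2*(3-2*s) * f (a-h) + s^2*(1-s) * (h * deriv f (a-h))))
        = X - (1-s)^2*(1+2*s) * Y - (-((1-s)^2*s)) * (h * Z) := by
      rw [hX, hY, hZ]; ring
    rw [key]
    have c00 : |(1-s)^2*(1+2*s)| ≤ 1 := cip_aux1 hs0 hs1
    have c01 : |(-((1-s)^2*s))| ≤ 1/4 := cip_aux2 hs0 hs1
    have b2 : |(1-s)^2*(1+2*s) * Y| ≤ M * h^4 / 6 := by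
      rw [abs_mul]
      calc |(1-s)^2*(1+2*s)| * |Y| ≤ 1 * (M * h^4 / 6) :=
            mul_le_mul c00 hYb (abs_nonneg _) (by norm_num)
        _ = M * h^4 / 6 := one_mul _
    have b3 : |(-((1-s)^2*s)) * (h * Z)| ≤ M * h^4 / 8 := by
      rw [abs_mul]
      have hhz : |h * Z| ≤ M * h^4 / 2 := by
        rw [abs_mul, abs_of_pos hh]
        calc h * |Z| ≤ h * (M * h^3 / 2) := mul_le_mul_of_nonneg_left hZb hh.le
          _ = M * h^4 / 2 := by ring
      calc |(-((1-s)^2*s))| * |h * Z| ≤ (1/4) * (M * h^4 / 2) :=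
            mul_le_mul c01 hhz (abs_nonneg _) (by norm_num)
        _ = M * h^4 / 8 := by ring
    calc |X - (1-s)^2*(1+2*s) * Y - (-((1-s)^2*s)) * (h * Z)|
        ≤ |X| + |(1-s)^2*(1+2*s) * Y| + |(-((1-s)^2*s)) * (h * Z)| := tri _ _ _
      _ ≤ M * h^4 / 6 + M * h^4 / 6 + M * h^4 / 8 := by
          exact add_le_add (add_le_add hX' b2) b3
      _ ≤ M * h^4 := by linarith
  · -- second component
    have key : h * deriv f (a - s*h) - (6*s*(1-s) * f a + (1-s)*(1-3*s) * (h * deriv f a)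
        + (-(6*s*(1-s)) * f (a-h) + (3*s-2)*s * (h * deriv f (a-h))))
        = h * Z1 - 6*s*(1-s) * Y - ((1-s)*(1-3*s)) * (h * Z) := by
      rw [hZ1, hY, hZ]; ring
    rw [key]
    have c10 : |6*s*(1-s)| = 6*s*(1-s) := cip_aux4 hs0 hs1
    have c11 : |(1-s)*(1-3*s)| ≤ 1 := cip_aux3 hs0 hs1
    have hhZ1 : |h * Z1| ≤ M * (1-s)^3 * h^4 / 2 := by
      rw [abs_mul, abs_of_pos hh]
      calc h * |Z1| ≤ h * (M * ((1-s)*h)^3 / 2) := mul_le_mul_of_nonneg_left hZ1b hh.le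
        _ = M * (1-s)^3 * h^4 / 2 := by ring
    have b2 : |6*s*(1-s) * Y| ≤ s*(1-s) * (M * h^4) := by
      rw [abs_mul, c10]
      calc 6*s*(1-s) * |Y| ≤ 6*s*(1-s) * (M * h^4 / 6) :=
            mul_le_mul_of_nonneg_left hYb
              (by have : (0:ℝ) ≤ 1 - s := by linarith
                  positivity)
        _ = s*(1-s) * (M * h^4) := by ring
    have b3 : |((1-s)*(1-3*s)) * (h * Z)| ≤ M * h^4 / 2 := by
      rw [abs_mul]
      have hhz : |h * Z| ≤ M * h^4 / 2 := by
        rw [abs_mul, abs_of_pos hh]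
        calc h * |Z| ≤ h * (M * h^3 / 2) := mul_le_mul_of_nonneg_left hZb hh.le
          _ = M * h^4 / 2 := by ring
      calc |(1-s)*(1-3*s)| * |h * Z| ≤ 1 * (M * h^4 / 2) :=
            mul_le_mul c11 hhz (abs_nonneg _) (by norm_num)
        _ = M * h^4 / 2 := one_mul _
    calc |h * Z1 - 6*s*(1-s) * Y - ((1-s)*(1-3*s)) * (h * Z)|
        ≤ |h * Z1| + |6*s*(1-s) * Y| + |((1-s)*(1-3*s)) * (h * Z)| := tri _ _ _
      _ ≤ M * (1-s)^3 * h^4 / 2 + s*(1-s) * (M * h^4) + M * h^4 / 2 := by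
          exact add_le_add (add_le_add hhZ1 b2) b3
      _ ≤ M * h^4 := cip_aux5 hM0 hh hs0 hs1

/-- The matrix `A(λ)` of the CIP one-step map. -/
def cipA (l : ℝ) : Matrix (Fin 2) (Fin 2) ℝ :=
  !![(1 - l)^2 * (1 + 2*l), -((1 - l)^2 * l);
     6 * l * (1 - l), (1 - l) * (1 - 3*l)]

/-- The matrix `B(λ)` of the CIP one-step map. -/
def cipB (l : ℝ) : Matrix (Fin 2) (Fin 2) ℝ :=
  !![l^2 * (3 - 2*l), l^2 * (1 - l);
     -(6 * l * (1 - l)), (3*l - 2) * l]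

/-- Consistency of the CIP scheme for `u_t + c u_x = 0` with exact
solution `u(t,x) = u₀(x − ct)`: each component of
`(U^{n+1}_k, Δx·V^{n+1}_k)ᵀ − A(λ)(U^n_j, Δx·V^n_j)ᵀ − B(λ)(U^n_{j−1}, Δx·V^n_{j−1})ᵀ`,
with `j = k − ℓ` and `cΔt = (ℓ+λ)Δx`, is bounded by `M (Δx)⁴`. -/
theorem stmt_3 (c Δx Δt M : ℝ) (hΔx : 0 < Δx) (hΔt : 0 < Δt)
    (u₀ : ℝ → ℝ) (hu₀ : ContDiff ℝ 4 u₀)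
    (hM : ∀ x : ℝ, |iteratedDeriv 4 u₀ x| ≤ M)
    (ℓ : ℤ) (lam : ℝ) (hlam : lam ∈ Set.Icc (0:ℝ) 1)
    (hstep : c * Δt = (ℓ + lam) * Δx)
    (U V : ℕ → ℤ → ℝ)
    (hU : ∀ (n : ℕ) (m : ℤ), U n m = u₀ (m * Δx - c * (n * Δt)))
    (hV : ∀ (n : ℕ) (m : ℤ), V n m = deriv u₀ (m * Δx - c * (n * Δt))) :
    ∀ (n : ℕ) (k : ℤ) (i : Fin 2),
      |(![U (n+1) k, Δx * V (n+1) k]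
          - (cipA lam).mulVec ![U n (k - ℓ), Δx * V n (k - ℓ)]
          - (cipB lam).mulVec ![U n (k - ℓ - 1), Δx * V n (k - ℓ - 1)]) i|
        ≤ M * Δx ^ 4 := by
  intro n k i
  have key := cip_key u₀ hu₀ M hM Δx hΔx lam hlam.1 hlam.2
    (((k:ℝ) - (ℓ:ℝ)) * Δx - c * ((n:ℝ) * Δt))
  have f1 : U (n+1) k = u₀ ((((k:ℝ) - (ℓ:ℝ)) * Δx - c * ((n:ℝ) * Δt)) - lam * Δx) := by
    rw [hU]; congr 1; push_cast; linear_combination -hstep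
  have f2 : V (n+1) k
      = deriv u₀ ((((k:ℝ) - (ℓ:ℝ)) * Δx - c * ((n:ℝ) * Δt)) - lam * Δx) := by
    rw [hV]; congr 1; push_cast; linear_combination -hstep
  have f3 : U n (k - ℓ) = u₀ (((k:ℝ) - (ℓ:ℝ)) * Δx - c * ((n:ℝ) * Δt)) := by
    rw [hU]; congr 1; push_cast; ring
  have f4 : V n (k - ℓ) = deriv u₀ (((k:ℝ) - (ℓ:ℝ)) * Δx - c * ((n:ℝ) * Δt)) := by
    rw [hV]; congr 1; push_cast; ring
  have f5 : U n (k - ℓ - 1) = u₀ ((((k:ℝ) - (ℓ:ℝ)) * Δx - c * ((n:ℝ) * Δt)) - Δx) := by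
    rw [hU]; congr 1; push_cast; ring
  have f6 : V n (k - ℓ - 1)
      = deriv u₀ ((((k:ℝ) - (ℓ:ℝ)) * Δx - c * ((n:ℝ) * Δt)) - Δx) := by
    rw [hV]; congr 1; push_cast; ring
  fin_cases i
  · simp only [Fin.zero_eta, Fin.isValue, Pi.sub_apply, Matrix.cons_val_zero, cipA, cipB,
      Matrix.mulVec, dotProduct, Fin.sum_univ_two, Matrix.cons_val', Matrix.cons_val_one,
      Matrix.head_cons, Matrix.of_apply, Matrix.empty_val', Matrix.cons_val_fin_one,
      Matrix.head_fin_const]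
    rw [f1, f3, f4, f5, f6]
    convert key.1 using 2
    ring
  · simp only [Fin.mk_one, Fin.isValue, Pi.sub_apply, Matrix.cons_val_zero, cipA, cipB,
      Matrix.mulVec, dotProduct, Fin.sum_univ_two, Matrix.cons_val', Matrix.cons_val_one,
      Matrix.head_cons, Matrix.of_apply, Matrix.empty_val', Matrix.cons_val_fin_one,
      Matrix.head_fin_const]
    rw [f2, f3, f4, f5, f6]
    convert key.2 using 2
    ring
end

section
/- For every λ with 0 < λ < 1 and every θ ∈ [0, 2π], the 2×2 complex matrix G(θ,λ) has two distinct eigenvalues (i.e., both eigenvalues of G(θ,λ) are simple). -/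
open Polynomial

/-- The CIP amplification matrix `G(θ,λ) = A(λ) + e^{−iθ} B(λ)`. -/
noncomputable def cipG (θ l : ℝ) : Matrix (Fin 2) (Fin 2) ℂ :=
  (cipA l).map (fun x => (x : ℂ)) +
    Complex.exp (-(Complex.I * θ)) • (cipB l).map (fun x => (x : ℂ))

lemma my_charpoly_fin_two (M : Matrix (Fin 2) (Fin 2) ℂ) :
    M.charpoly = X^2 - C M.trace * X + C M.det := by
  rw [Matrix.charpoly, Matrix.det_fin_two, Matrix.trace_fin_two, Matrix.det_fin_two]
  simp [Matrix.charmatrix_apply]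
  ring

/-- For `0 < λ < 1` and `θ ∈ [0, 2π]`, the amplification matrix
`G(θ,λ)` has two distinct (hence simple) eigenvalues: its characteristic polynomial
splits as `(X − z₁)(X − z₂)` with `z₁ ≠ z₂`. -/
theorem stmt_4 (θ lam : ℝ) (hθ : θ ∈ Set.Icc 0 (2 * Real.pi))
    (hlam0 : 0 < lam) (hlam1 : lam < 1) :
    ∃ z₁ z₂ : ℂ, z₁ ≠ z₂ ∧ (cipG θ lam).charpoly = (X - C z₁) * (X - C z₂) := by
  set e : ℂ := Complex.exp (-(Complex.I * θ)) with he_def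
  set L : ℂ := (lam : ℂ) with hL_def
  have he : ‖e‖ = 1 := by
    rw [he_def, Complex.norm_exp]
    simp
  -- entries of cipG
  have hent : ∀ i j, cipG θ lam i j = ((cipA lam i j : ℂ)) + e * (cipB lam i j : ℂ) := by
    intro i j
    simp [cipG, Matrix.add_apply, Matrix.smul_apply, Matrix.map_apply, smul_eq_mul]
    exact Or.inl he_def.symm
  have htr : (cipG θ lam).trace =
      ((1-L)^2*(1+2*L) + e*(L^2*(3-2*L))) + ((1-L)*(1-3*L) + e*((3*L-2)*L)) := by
    rw [Matrix.trace_fin_two, hent, hent]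
    simp [cipA, cipB]
    rfl
  have hdet : (cipG θ lam).det =
      (((1-L)^2*(1+2*L) + e*(L^2*(3-2*L))) * ((1-L)*(1-3*L) + e*((3*L-2)*L)))
      - ((-((1-L)^2*L) + e*(L^2*(1-L))) * (6*L*(1-L) + e*(-(6*L*(1-L))))) := by
    rw [Matrix.det_fin_two, hent, hent, hent, hent]
    simp [cipA, cipB]
    rfl
  set t := (cipG θ lam).trace
  set d := (cipG θ lam).det
  -- discriminant factorization
  set q : ℂ := (L^2-4*L+1)*e^2 + (10+2*L-2*L^2)*e + (L^2+2*L-2) with hq_def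
  have hdisc : t^2 - 4*d = 4*L^2*(1-L)^2*q := by
    rw [htr, hdet, hq_def]; ring
  -- q ≠ 0
  have hq : q ≠ 0 := by
    intro h
    have key : (((10+2*lam-2*lam^2 : ℝ)) : ℂ) * e
        = -((((lam^2-4*lam+1 : ℝ)) : ℂ)*e^2 + (((lam^2+2*lam-2 : ℝ)) : ℂ)) := by
      rw [hq_def] at h
      push_cast
      linear_combination h
    have h1 : ‖((((10+2*lam-2*lam^2 : ℝ)) : ℂ) * e)‖ = |10+2*lam-2*lam^2| := by
      rw [norm_mul, he, Complex.norm_real, Real.norm_eq_abs, mul_one]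
    have h2 : ‖(-((((lam^2-4*lam+1 : ℝ)) : ℂ)*e^2 + (((lam^2+2*lam-2 : ℝ)) : ℂ)))‖
        ≤ |lam^2-4*lam+1| + |lam^2+2*lam-2| := by
      rw [norm_neg]
      refine le_trans (norm_add_le _ _) ?_
      rw [norm_mul, norm_pow, he, Complex.norm_real, Complex.norm_real]
      simp
    have := congrArg norm key
    rw [h1] at this
    have ha : |lam^2-4*lam+1| ≤ 2 := by
      rw [abs_le]; constructor <;> nlinarith
    have hb : |lam^2+2*lam-2| ≤ 2 := by
      rw [abs_le]; constructor <;> nlinarith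
    have hc : |10+2*lam-2*lam^2| ≥ 10 := by
      rw [abs_of_pos (by nlinarith)]; nlinarith
    linarith [this ▸ h2]
  have hL0 : L ≠ 0 := by
    simp [hL_def, Complex.ofReal_ne_zero]; linarith
  have hL1 : (1 : ℂ) - L ≠ 0 := by
    rw [hL_def, sub_ne_zero]
    intro h
    have : (1 : ℝ) = lam := by exact_mod_cast h
    linarith
  have hdne : t^2 - 4*d ≠ 0 := by
    rw [hdisc]
    exact mul_ne_zero (mul_ne_zero (mul_ne_zero (by norm_num) (pow_ne_zero _ hL0))
      (pow_ne_zero _ hL1)) hq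
  obtain ⟨s, hs⟩ := IsAlgClosed.exists_pow_nat_eq (k := ℂ) (t^2 - 4*d) (n := 2) two_pos
  have hs0 : s ≠ 0 := by
    intro h; apply hdne; rw [← hs, h]; ring
  refine ⟨(t+s)/2, (t-s)/2, ?_, ?_⟩
  · intro h
    apply hs0
    linear_combination h
  · rw [my_charpoly_fin_two]
    have hsum : (t+s)/2 + (t-s)/2 = t := by ring
    have hprod : ((t+s)/2) * ((t-s)/2) = d := by
      have : s^2 = t^2 - 4*d := hs
      linear_combination (-(1:ℂ)/4) * this
    have expand : (X - C ((t+s)/2)) * (X - C ((t-s)/2))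
        = X^2 - (C ((t+s)/2) + C ((t-s)/2)) * X + C ((t+s)/2) * C ((t-s)/2) := by ring
    rw [expand, ← map_add, ← map_mul, hsum, hprod]
end

section
/- For every θ with 0 < θ < 2π and every λ with 0 < λ < 1, every eigenvalue z ∈ ℂ of the matrix G(θ,λ) satisfies |z| < 1. -/
set_option maxRecDepth 10000
set_option maxHeartbeats 2000000

lemma schur_quad (T D z : ℂ) (hroot : z^2 - T*z + D = 0)
    (h1 : ‖D‖ < 1)
    (h2 : ‖(starRingEnd ℂ) T * D - T‖ < 1 - ‖D‖ ^ 2) :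
    ‖z‖ < 1 := by
  by_contra hge
  push_neg at hge
  set w : ℂ := T - z with hw
  have hD : D = z * w := by rw [hw]; linear_combination hroot
  have hx : (1:ℝ) ≤ ‖z‖ := hge
  set x : ℝ := ‖z‖ with hxd
  set y : ℝ := ‖w‖ with hyd
  have hy0 : (0:ℝ) ≤ y := norm_nonneg w
  have hxy : x * y < 1 := by rw [hxd, hyd, ← norm_mul, ← hD]; exact h1
  have hylt : y < 1 := by nlinarith
  have hnz : Complex.normSq z = x^2 := by rw [hxd, Complex.sq_norm]
  have hnw : Complex.normSq w = y^2 := by rw [hyd, Complex.sq_norm]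
  have hkey : (starRingEnd ℂ) T * D - T
      = ((Complex.normSq z : ℂ) - 1) * w + ((Complex.normSq w : ℂ) - 1) * z := by
    have hz' := Complex.mul_conj z
    have hw' := Complex.mul_conj w
    have hT : T = z + w := by rw [hw]; ring
    rw [hT, hD, map_add]
    linear_combination w * hz' + z * hw'
  have habs1 : ‖((Complex.normSq w : ℂ) - 1) * z‖ = (1 - y^2) * x := by
    rw [norm_mul, hnw, ← hxd,
      show ((y^2 : ℝ) : ℂ) - 1 = ((y^2 - 1 : ℝ) : ℂ) by push_cast; ring,
      Complex.norm_real, Real.norm_eq_abs, abs_of_nonpos (by nlinarith : (y:ℝ)^2 - 1 ≤ 0)]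
    ring
  have habs2 : ‖((Complex.normSq z : ℂ) - 1) * w‖ = (x^2 - 1) * y := by
    rw [norm_mul, hnz, ← hyd,
      show ((x^2 : ℝ) : ℂ) - 1 = ((x^2 - 1 : ℝ) : ℂ) by push_cast; ring,
      Complex.norm_real, Real.norm_eq_abs, abs_of_nonneg (by nlinarith : (0:ℝ) ≤ x^2 - 1)]
  have htri : (1 - y^2) * x
      ≤ ‖(starRingEnd ℂ) T * D - T‖ + (x^2 - 1) * y := by
    have h := norm_sub_le ((starRingEnd ℂ) T * D - T) (((Complex.normSq z : ℂ) - 1) * w)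
    have hEA : ((starRingEnd ℂ) T * D - T) - ((Complex.normSq z : ℂ) - 1) * w
        = ((Complex.normSq w : ℂ) - 1) * z := by rw [hkey]; ring
    rw [hEA, habs1, habs2] at h
    exact h
  have hDabs : ‖D‖ = x * y := by rw [hD, norm_mul, ← hxd, ← hyd]
  rw [hDabs] at h2
  nlinarith [mul_nonneg (sub_nonneg.2 hx) (sub_nonneg.2 hylt.le), sub_pos.2 hxy]



lemma ineqY (lam c : ℝ) (hlam0 : 0 < lam) (h1lam : 0 < 1 - lam)
    (hc1 : c < 1) (hcm : -1 ≤ c) : ((1 - 8*lam - 4*lam*c + 32*lam^2 + 16*lam^2*c - 56*lam^3 - 16*lam^3*c + 52*lam^4 - 20*lam^4*c + 4*lam^4*c^2 - 40*lam^5 + 56*lam^5*c - 16*lam^5*c^2 + 32*lam^6 - 56*lam^6*c + 24*lam^6*c^2 - 16*lam^7 + 32*lam^7*c - 16*lam^7*c^2 + 4*lam^8 - 8*lam^8*c + 4*lam^8*c^2) : ℝ) < 1 := by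
  have h1c : (0:ℝ) < 1 - c := by linarith
  have hcp : (0:ℝ) ≤ 1 + c := by linarith
  have hcc : (0:ℝ) ≤ 1 - c^2 := by nlinarith
  have hW1 : (0:ℝ) < (12 - 36*lam + 36*lam^2) := by nlinarith [sq_nonneg (6*lam - 3)]
  have hWm : (0:ℝ) < (4 - 12*lam + 28*lam^2 - 48*lam^3 + 64*lam^4 - 48*lam^5 + 16*lam^6) := by
    nlinarith [sq_nonneg (lam*(1-lam)), sq_nonneg (1-2*lam), sq_nonneg (2*lam^2 - lam),
      mul_pos hlam0 h1lam, sq_nonneg (2*lam^2 - 2*lam + 1),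
      mul_pos (mul_pos hlam0 hlam0) h1lam,
      mul_pos (mul_pos h1lam h1lam) hlam0]
  have t1 : (0:ℝ) ≤ (1+c)*(12 - 36*lam + 36*lam^2) := mul_nonneg hcp hW1.le
  have t2 : (0:ℝ) < (1-c)*(4 - 12*lam + 28*lam^2 - 48*lam^3 + 64*lam^4 - 48*lam^5 + 16*lam^6) := mul_pos h1c hWm
  have t3 : (0:ℝ) ≤ 8*lam^3*(1-lam)^3*(1-c^2) :=
    mul_nonneg (mul_nonneg (mul_nonneg (by norm_num) (pow_nonneg hlam0.le 3))
      (pow_nonneg h1lam.le 3)) hcc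
  have hprod : (0:ℝ) < lam*(1-lam)*((1+c)*(12 - 36*lam + 36*lam^2) + (1-c)*(4 - 12*lam + 28*lam^2 - 48*lam^3 + 64*lam^4 - 48*lam^5 + 16*lam^6)
      + 8*lam^3*(1-lam)^3*(1-c^2)) :=
    mul_pos (mul_pos hlam0 h1lam) (by linarith)
  have hid : 2*(1 - ((1 - 8*lam - 4*lam*c + 32*lam^2 + 16*lam^2*c - 56*lam^3 - 16*lam^3*c + 52*lam^4 - 20*lam^4*c + 4*lam^4*c^2 - 40*lam^5 + 56*lam^5*c - 16*lam^5*c^2 + 32*lam^6 - 56*lam^6*c + 24*lam^6*c^2 - 16*lam^7 + 32*lam^7*c - 16*lam^7*c^2 + 4*lam^8 - 8*lam^8*c + 4*lam^8*c^2) : ℝ)) = lam*(1-lam)*((1+c)*(12 - 36*lam + 36*lam^2) + (1-c)*(4 - 12*lam + 28*lam^2 - 48*lam^3 + 64*lam^4 - 48*lam^5 + 16*lam^6)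
      + 8*lam^3*(1-lam)^3*(1-c^2)) := by ring
  linarith

lemma ineqM (lam c : ℝ) (hlam0 : 0 < lam) (h1lam : 0 < 1 - lam)
    (hc1 : c < 1) (hcm : -1 ≤ c) : ((64*lam^2 + 64*lam^2*c + 16*lam^2*c^2 - 512*lam^3 - 512*lam^3*c - 128*lam^3*c^2 + 1872*lam^4 + 1824*lam^4*c + 336*lam^4*c^2 - 4032*lam^5 - 3680*lam^5*c - 32*lam^5*c^2 - 32*lam^5*c^3 + 5680*lam^6 + 4480*lam^6*c - 1808*lam^6*c^2 + 288*lam^6*c^3 - 5696*lam^7 - 3104*lam^7*c + 4672*lam^7*c^2 - 1056*lam^7*c^3 + 4640*lam^8 + 416*lam^8*c - 5776*lam^8*c^2 + 2016*lam^8*c^3 - 3552*lam^9 + 2176*lam^9*c + 3424*lam^9*c^2 - 2048*lam^9*c^3 + 2576*lam^10 - 3744*lam^10*c + 336*lam^10*c^2 + 832*lam^10*c^3 - 1600*lam^11 + 3552*lam^11*c - 2304*lam^11*c^2 + 352*lam^11*c^3 + 752*lam^12 - 2048*lam^12*c + 1840*lam^12*c^2 - 544*lam^12*c^3 - 224*lam^13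 + 672*lam^13*c - 672*lam^13*c^2 + 224*lam^13*c^3 + 32*lam^14 - 96*lam^14*c + 96*lam^14*c^2 - 32*lam^14*c^3) : ℝ) < (1 - ((1 - 8*lam - 4*lam*c + 32*lam^2 + 16*lam^2*c - 56*lam^3 - 16*lam^3*c + 52*lam^4 - 20*lam^4*c + 4*lam^4*c^2 - 40*lam^5 + 56*lam^5*c - 16*lam^5*c^2 + 32*lam^6 - 56*lam^6*c + 24*lam^6*c^2 - 16*lam^7 + 32*lam^7*c - 16*lam^7*c^2 + 4*lam^8 - 8*lam^8*c + 4*lam^8*c^2) : ℝ))^2 := by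
  have h1c : (0:ℝ) < 1 - c := by linarith
  have hC2 : (0:ℝ) ≤ (16*lam^4 - 64*lam^5 + 96*lam^6 - 64*lam^7 + 16*lam^8) := by nlinarith [pow_nonneg (mul_nonneg hlam0.le h1lam.le) 4]
  have hB2C : (-(32*lam^2) + 96*lam^3 - 160*lam^4 + 224*lam^5 - 224*lam^6 + 128*lam^7 - 32*lam^8) + 2*(16*lam^4 - 64*lam^5 + 96*lam^6 - 64*lam^7 + 16*lam^8) ≤ 0 := by
    nlinarith [mul_nonneg (sq_nonneg lam) (pow_nonneg h1lam.le 3),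
      mul_nonneg (sq_nonneg lam) (sq_nonneg (lam*(1-lam)))]
  have hvert : (-(32*lam^2) + 96*lam^3 - 160*lam^4 + 224*lam^5 - 224*lam^6 + 128*lam^7 - 32*lam^8) + (16*lam^4 - 64*lam^5 + 96*lam^6 - 64*lam^7 + 16*lam^8)*(c+1) ≤ 0 := by
    nlinarith [mul_nonneg hC2 h1c.le]
  have hSmin : 48*(3*lam^2*(1-lam)^2 + (2*lam-1)^2)
      ≤ (48 - 192*lam + 368*lam^2 - 384*lam^3 + 288*lam^4 - 160*lam^5 + 128*lam^6 - 64*lam^7 + 16*lam^8) + (-(32*lam^2) + 96*lam^3 - 160*lam^4 + 224*lam^5 - 224*lam^6 + 128*lam^7 - 32*lam^8)*c + (16*lam^4 - 64*lam^5 + 96*lam^6 - 64*lam^7 + 16*lam^8)*c^2 := by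
    nlinarith [mul_nonneg h1c.le (neg_nonneg.2 hvert)]
  have hS1 : (0:ℝ) < 48*(3*lam^2*(1-lam)^2 + (2*lam-1)^2) := by
    nlinarith [sq_nonneg (2*lam-1), mul_pos (mul_pos hlam0 hlam0) (mul_pos h1lam h1lam)]
  have hfpos : (0:ℝ) < lam^4*(1-lam)^4*(1-c)^2 :=
    mul_pos (mul_pos (pow_pos hlam0 4) (pow_pos h1lam 4)) (pow_pos h1c 2)
  have h1 : (0:ℝ) < lam^4*(1-lam)^4*(1-c)^2 * ((48 - 192*lam + 368*lam^2 - 384*lam^3 + 288*lam^4 - 160*lam^5 + 128*lam^6 - 64*lam^7 + 16*lam^8) + (-(32*lam^2) + 96*lam^3 - 160*lam^4 + 224*lam^5 - 224*lam^6 + 128*lam^7 - 32*lam^8)*c + (16*lam^4 - 64*lam^5 + 96*lam^6 - 64*lam^7 + 16*lam^8)*c^2) := by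
    calc (0:ℝ) < lam^4*(1-lam)^4*(1-c)^2 * (48*(3*lam^2*(1-lam)^2 + (2*lam-1)^2)) :=
          mul_pos hfpos hS1
      _ ≤ _ := mul_le_mul_of_nonneg_left hSmin hfpos.le
  have hid : (1 - ((1 - 8*lam - 4*lam*c + 32*lam^2 + 16*lam^2*c - 56*lam^3 - 16*lam^3*c + 52*lam^4 - 20*lam^4*c + 4*lam^4*c^2 - 40*lam^5 + 56*lam^5*c - 16*lam^5*c^2 + 32*lam^6 - 56*lam^6*c + 24*lam^6*c^2 - 16*lam^7 + 32*lam^7*c - 16*lam^7*c^2 + 4*lam^8 - 8*lam^8*c + 4*lam^8*c^2) : ℝ))^2 - ((64*lam^2 + 64*lam^2*c + 16*lam^2*c^2 - 512*lam^3 - 512*lam^3*c - 128*lam^3*c^2 + 1872*lam^4 + 1824*lam^4*c + 336*lam^4*c^2 - 4032*lam^5 - 3680*lam^5*c - 32*lam^5*c^2 - 32*lam^5*c^3 + 5680*lam^6 + 4480*lam^6*c - 1808*lam^6*c^2 + 288*lam^6*c^3 - 5696*lam^7 - 3104*lam^7*c + 4672*lam^7*c^2 - 1056*lam^7*c^3 +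 4640*lam^8 + 416*lam^8*c - 5776*lam^8*c^2 + 2016*lam^8*c^3 - 3552*lam^9 + 2176*lam^9*c + 3424*lam^9*c^2 - 2048*lam^9*c^3 + 2576*lam^10 - 3744*lam^10*c + 336*lam^10*c^2 + 832*lam^10*c^3 - 1600*lam^11 + 3552*lam^11*c - 2304*lam^11*c^2 + 352*lam^11*c^3 + 752*lam^12 - 2048*lam^12*c + 1840*lam^12*c^2 - 544*lam^12*c^3 - 224*lam^13 + 672*lam^13*c - 672*lam^13*c^2 + 224*lam^13*c^3 + 32*lam^14 - 96*lam^14*c + 96*lam^14*c^2 - 32*lam^14*c^3) : ℝ)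
      = lam^4*(1-lam)^4*(1-c)^2 * ((48 - 192*lam + 368*lam^2 - 384*lam^3 + 288*lam^4 - 160*lam^5 + 128*lam^6 - 64*lam^7 + 16*lam^8) + (-(32*lam^2) + 96*lam^3 - 160*lam^4 + 224*lam^5 - 224*lam^6 + 128*lam^7 - 32*lam^8)*c + (16*lam^4 - 64*lam^5 + 96*lam^6 - 64*lam^7 + 16*lam^8)*c^2) := by ring
  linarith


lemma abs_bounds (a b Y M : ℝ) (ha : 0 ≤ a) (hb : 0 ≤ b)
    (ha2 : a^2 = Y) (hb2 : b^2 = M) (hY : Y < 1) (hM : M < (1-Y)^2) :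
    a < 1 ∧ b < 1 - a^2 := by
  constructor
  · nlinarith
  · nlinarith

lemma idD (lam c : ℝ) (e : ℂ) (hquad : e^2 = 2*((c:ℝ):ℂ)*e - 1) :
    ((1 - 4*(lam:ℂ) + 6*(lam:ℂ)^2 - 4*(lam:ℂ)^3 + (lam:ℂ)^4) + (-(2*(lam:ℂ)) + 4*(lam:ℂ)^3 - 2*(lam:ℂ)^4)*e + (lam:ℂ)^4*e^2) * ((1 - 4*(lam:ℂ) + 6*(lam:ℂ)^2 - 4*(lam:ℂ)^3 + (lam:ℂ)^4) + (-(2*(lam:ℂ)) + 4*(lam:ℂ)^3 - 2*(lam:ℂ)^4)*(2*(c:ℂ) - e) + (lam:ℂ)^4*(2*(c:ℂ) - e)^2) = (((1 - 8*lam - 4*lam*c + 32*lam^2 + 16*lam^2*c - 56*lam^3 - 16*lam^3*c + 52*lam^4 - 20*lam^4*c + 4*lam^4*c^2 - 40*lam^5 + 56*lam^5*c - 16*lam^5*c^2 + 32*lam^6 - 56*lam^6*c + 24*lam^6*c^2 - 16*lam^7 + 32*lam^7*c - 16*lam^7*c^2 + 4*lam^8 - 8*lam^8*c + 4*lam^8*c^2)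 : ℝ) : ℂ) := by
  push_cast
  linear_combination (-4*(lam:ℂ)^2 + 18*(lam:ℂ)^4 - 16*(lam:ℂ)^5 + 4*(lam:ℂ)^5*(c:ℂ) - 4*(lam:ℂ)^6 + 8*(lam:ℂ)^7 - 8*(lam:ℂ)^7*(c:ℂ) - 3*(lam:ℂ)^8 + 1*(lam:ℂ)^8*e^2 + 4*(lam:ℂ)^8*(c:ℂ) - 2*(lam:ℂ)^8*(c:ℂ)*e) * hquad

lemma idU (lam c : ℝ) (e : ℂ) (hquad : e^2 = 2*((c:ℝ):ℂ)*e - 1) :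
    (((2 - 4*(lam:ℂ) + 2*(lam:ℂ)^3) + (-(2*(lam:ℂ)) + 6*(lam:ℂ)^2 - 2*(lam:ℂ)^3)*(2*(c:ℂ) - e)) * ((1 - 4*(lam:ℂ) + 6*(lam:ℂ)^2 - 4*(lam:ℂ)^3 + (lam:ℂ)^4) + (-(2*(lam:ℂ)) + 4*(lam:ℂ)^3 - 2*(lam:ℂ)^4)*e + (lam:ℂ)^4*e^2) - ((2 - 4*(lam:ℂ) + 2*(lam:ℂ)^3) + (-(2*(lam:ℂ)) + 6*(lam:ℂ)^2 - 2*(lam:ℂ)^3)*e)) * (((2 - 4*(lam:ℂ) + 2*(lam:ℂ)^3) + (-(2*(lam:ℂ)) + 6*(lam:ℂ)^2 - 2*(lam:ℂ)^3)*e) * ((1 - 4*(lam:ℂ) + 6*(lam:ℂ)^2 - 4*(lam:ℂ)^3 + (lam:ℂ)^4) + (-(2*(lam:ℂ)) + 4*(lam:ℂ)^3 - 2*(lam:ℂ)^4)*(2*(c:ℂ) - e) + (lam:ℂ)^4*(2*(c:ℂ) - e)^2) - ((2 - 4*(lam:ℂ) + 2*(lam:ℂ)^3) + (-(2*(lam:ℂ))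 + 6*(lam:ℂ)^2 - 2*(lam:ℂ)^3)*(2*(c:ℂ) - e))) = (((64*lam^2 + 64*lam^2*c + 16*lam^2*c^2 - 512*lam^3 - 512*lam^3*c - 128*lam^3*c^2 + 1872*lam^4 + 1824*lam^4*c + 336*lam^4*c^2 - 4032*lam^5 - 3680*lam^5*c - 32*lam^5*c^2 - 32*lam^5*c^3 + 5680*lam^6 + 4480*lam^6*c - 1808*lam^6*c^2 + 288*lam^6*c^3 - 5696*lam^7 - 3104*lam^7*c + 4672*lam^7*c^2 - 1056*lam^7*c^3 + 4640*lam^8 + 416*lam^8*c - 5776*lam^8*c^2 + 2016*lam^8*c^3 - 3552*lam^9 + 2176*lam^9*c + 3424*lam^9*c^2 - 2048*lam^9*c^3 + 2576*lam^10 - 3744*lam^10*c + 336*lam^10*c^2 + 832*lam^10*c^3 - 1600*lam^11 + 3552*lam^11*c - 2304*lam^11*c^2 + 352*lam^11*c^3 + 752*lam^12 - 2048*lam^12*c + 1840*lam^12*c^2 - 544*lam^12*c^3 - 224*lam^13 + 672*lam^13*c - 672*lam^13*c^2 + 224*lam^13*c^3 + 32*lam^14 - 96*lam^14*c + 96*lam^14*c^2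 - 32*lam^14*c^3) : ℝ) : ℂ) := by
  push_cast
  linear_combination (64*(lam:ℂ)^3 + 32*(lam:ℂ)^3*(c:ℂ) - 576*(lam:ℂ)^4 + 16*(lam:ℂ)^4*e^2 - 224*(lam:ℂ)^4*(c:ℂ) - 32*(lam:ℂ)^4*(c:ℂ)*e + 2080*(lam:ℂ)^5 - 96*(lam:ℂ)^5*e^2 + 560*(lam:ℂ)^5*(c:ℂ) + 192*(lam:ℂ)^5*(c:ℂ)*e - 4224*(lam:ℂ)^6 + 96*(lam:ℂ)^6*e^2 - 384*(lam:ℂ)^6*(c:ℂ) - 192*(lam:ℂ)^6*(c:ℂ)*e - 48*(lam:ℂ)^6*(c:ℂ)^2 + 5632*(lam:ℂ)^7 + 448*(lam:ℂ)^7*e^2 - 960*(lam:ℂ)^7*(c:ℂ) - 896*(lam:ℂ)^7*(c:ℂ)*e - 16*(lam:ℂ)^7*(c:ℂ)*e^2 + 320*(lam:ℂ)^7*(c:ℂ)^2 + 32*(lam:ℂ)^7*(c:ℂ)^2*e - 5532*(lam:ℂ)^8 - 1228*(lam:ℂ)^8*e^2 + 2672*(lam:ℂ)^8*(c:ℂ)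 + 2456*(lam:ℂ)^8*(c:ℂ)*e + 96*(lam:ℂ)^8*(c:ℂ)*e^2 - 816*(lam:ℂ)^8*(c:ℂ)^2 - 192*(lam:ℂ)^8*(c:ℂ)^2*e + 4336*(lam:ℂ)^9 + 1040*(lam:ℂ)^9*e^2 - 3560*(lam:ℂ)^9*(c:ℂ) - 2080*(lam:ℂ)^9*(c:ℂ)*e - 152*(lam:ℂ)^9*(c:ℂ)*e^2 + 1120*(lam:ℂ)^9*(c:ℂ)^2 + 304*(lam:ℂ)^9*(c:ℂ)^2*e - 2800*(lam:ℂ)^10 - 68*(lam:ℂ)^10*e^2 - 4*(lam:ℂ)^10*e^4 + 3528*(lam:ℂ)^10*(c:ℂ) + 136*(lam:ℂ)^10*(c:ℂ)*e - 72*(lam:ℂ)^10*(c:ℂ)*e^2 + 16*(lam:ℂ)^10*(c:ℂ)*e^3 - 1152*(lam:ℂ)^10*(c:ℂ)^2 + 144*(lam:ℂ)^10*(c:ℂ)^2*e - 16*(lam:ℂ)^10*(c:ℂ)^2*e^2 + 1512*(lam:ℂ)^11 - 448*(lam:ℂ)^11*e^2 + 24*(lam:ℂ)^11*e^4 - 2728*(lam:ℂ)^11*(c:ℂ)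 + 896*(lam:ℂ)^11*(c:ℂ)*e + 376*(lam:ℂ)^11*(c:ℂ)*e^2 - 96*(lam:ℂ)^11*(c:ℂ)*e^3 + 1120*(lam:ℂ)^11*(c:ℂ)^2 - 752*(lam:ℂ)^11*(c:ℂ)^2*e + 96*(lam:ℂ)^11*(c:ℂ)^2*e^2 - 656*(lam:ℂ)^12 + 324*(lam:ℂ)^12*e^2 - 44*(lam:ℂ)^12*e^4 + 1480*(lam:ℂ)^12*(c:ℂ) - 648*(lam:ℂ)^12*(c:ℂ)*e - 360*(lam:ℂ)^12*(c:ℂ)*e^2 + 176*(lam:ℂ)^12*(c:ℂ)*e^3 - 816*(lam:ℂ)^12*(c:ℂ)^2 + 720*(lam:ℂ)^12*(c:ℂ)^2*e - 176*(lam:ℂ)^12*(c:ℂ)^2*e^2 + 192*(lam:ℂ)^13 - 104*(lam:ℂ)^13*e^2 + 24*(lam:ℂ)^13*e^4 - 488*(lam:ℂ)^13*(c:ℂ) + 208*(lam:ℂ)^13*(c:ℂ)*e + 152*(lam:ℂ)^13*(c:ℂ)*e^2 - 96*(lam:ℂ)^13*(c:ℂ)*e^3 + 320*(lam:ℂ)^13*(c:ℂ)^2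 - 304*(lam:ℂ)^13*(c:ℂ)^2*e + 96*(lam:ℂ)^13*(c:ℂ)^2*e^2 - 28*(lam:ℂ)^14 + 16*(lam:ℂ)^14*e^2 - 4*(lam:ℂ)^14*e^4 + 72*(lam:ℂ)^14*(c:ℂ) - 32*(lam:ℂ)^14*(c:ℂ)*e - 24*(lam:ℂ)^14*(c:ℂ)*e^2 + 16*(lam:ℂ)^14*(c:ℂ)*e^3 - 48*(lam:ℂ)^14*(c:ℂ)^2 + 48*(lam:ℂ)^14*(c:ℂ)^2*e - 16*(lam:ℂ)^14*(c:ℂ)^2*e^2) * hquad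

/-- For `0 < θ < 2π` and `0 < λ < 1`, every eigenvalue `z` of the
amplification matrix `G(θ,λ)` satisfies `|z| < 1`. -/
theorem stmt_5 (θ lam : ℝ) (hθ0 : 0 < θ) (hθ1 : θ < 2 * Real.pi)
    (hlam0 : 0 < lam) (hlam1 : lam < 1) :
    ∀ z ∈ spectrum ℂ (cipG θ lam), ‖z‖ < 1 := by
  intro z hz
  have h1lam : 0 < 1 - lam := by linarith
  rw [spectrum.mem_iff, Matrix.isUnit_iff_isUnit_det] at hz
  have hdet : (z • (1 : Matrix (Fin 2) (Fin 2) ℂ) - cipG θ lam).det = 0 := by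
    simpa [Algebra.algebraMap_eq_smul_one, isUnit_iff_ne_zero] using hz
  rw [Matrix.det_fin_two] at hdet
  simp [cipG, cipA, cipB, Matrix.smul_apply, Matrix.one_apply] at hdet
  set e : ℂ := Complex.exp (-(Complex.I * θ)) with he
  set c : ℝ := Real.cos θ with hcdef
  have hc1 : c < 1 := by
    rcases lt_or_eq_of_le (Real.cos_le_one θ) with h | h
    · exact h
    · exfalso
      have h0 : θ = 0 := by
        rw [← Real.cos_eq_one_iff_of_lt_of_lt (by linarith [Real.pi_pos]) hθ1]
        exact h
      linarith
  have hcm : -1 ≤ c := Real.neg_one_le_cos θ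
  have hs : Real.sin θ ^ 2 = 1 - c ^ 2 := by
    rw [hcdef]; nlinarith [Real.sin_sq_add_cos_sq θ]
  have he2 : e = (c : ℂ) - (Real.sin θ : ℂ) * Complex.I := by
    rw [he, hcdef]
    apply Complex.ext <;>
      simp [Complex.exp_re, Complex.exp_im, Real.cos_neg, Real.sin_neg,
        Complex.cos_ofReal_re, Complex.sin_ofReal_re]
  have hs2 : ((Real.sin θ : ℂ))^2 = 1 - ((c:ℝ) : ℂ)^2 := by
    exact_mod_cast congrArg (fun t : ℝ => (t : ℂ)) hs
  have hquad : e^2 = 2*((c:ℝ):ℂ)*e - 1 := by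
    rw [he2]
    linear_combination ((Real.sin θ : ℂ))^2 * Complex.I_sq - hs2
  have hconj : (starRingEnd ℂ) e = 2*((c:ℝ):ℂ) - e := by
    rw [he2]
    simp only [map_sub, map_mul, Complex.conj_ofReal, Complex.conj_I]
    ring
  clear_value e c
  clear hz he hcdef he2 hs hs2
  have hroot : z^2 - ((2 - 4*(lam:ℂ) + 2*(lam:ℂ)^3) + (-(2*(lam:ℂ)) + 6*(lam:ℂ)^2 - 2*(lam:ℂ)^3)*e)*z + ((1 - 4*(lam:ℂ) + 6*(lam:ℂ)^2 - 4*(lam:ℂ)^3 + (lam:ℂ)^4) + (-(2*(lam:ℂ)) + 4*(lam:ℂ)^3 - 2*(lam:ℂ)^4)*e + (lam:ℂ)^4*e^2) = 0 := by linear_combination hdet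
  have hconjT : (starRingEnd ℂ) ((2 - 4*(lam:ℂ) + 2*(lam:ℂ)^3) + (-(2*(lam:ℂ)) + 6*(lam:ℂ)^2 - 2*(lam:ℂ)^3)*e) = ((2 - 4*(lam:ℂ) + 2*(lam:ℂ)^3) + (-(2*(lam:ℂ)) + 6*(lam:ℂ)^2 - 2*(lam:ℂ)^3)*(2*(c:ℂ) - e)) := by
    simp only [map_add, map_sub, map_mul, map_pow, map_neg, map_one, map_ofNat,
      Complex.conj_ofReal, hconj]
  have hconjD : (starRingEnd ℂ) ((1 - 4*(lam:ℂ) + 6*(lam:ℂ)^2 - 4*(lam:ℂ)^3 + (lam:ℂ)^4) + (-(2*(lam:ℂ)) + 4*(lam:ℂ)^3 - 2*(lam:ℂ)^4)*e + (lam:ℂ)^4*e^2) = ((1 - 4*(lam:ℂ) + 6*(lam:ℂ)^2 - 4*(lam:ℂ)^3 + (lam:ℂ)^4) + (-(2*(lam:ℂ)) + 4*(lam:ℂ)^3 - 2*(lam:ℂ)^4)*(2*(c:ℂ) - e) + (lam:ℂ)^4*(2*(c:ℂ) - e)^2) := by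
    simp only [map_add, map_sub, map_mul, map_pow, map_neg, map_one, map_ofNat,
      Complex.conj_ofReal, hconj]
  have hYlt := ineqY lam c hlam0 h1lam hc1 hcm
  have hMlt := ineqM lam c hlam0 h1lam hc1 hcm
  have hDnorm : Complex.normSq ((1 - 4*(lam:ℂ) + 6*(lam:ℂ)^2 - 4*(lam:ℂ)^3 + (lam:ℂ)^4) + (-(2*(lam:ℂ)) + 4*(lam:ℂ)^3 - 2*(lam:ℂ)^4)*e + (lam:ℂ)^4*e^2) = ((1 - 8*lam - 4*lam*c + 32*lam^2 + 16*lam^2*c - 56*lam^3 - 16*lam^3*c + 52*lam^4 - 20*lam^4*c + 4*lam^4*c^2 - 40*lam^5 + 56*lam^5*c - 16*lam^5*c^2 + 32*lam^6 - 56*lam^6*c + 24*lam^6*c^2 - 16*lam^7 + 32*lam^7*c - 16*lam^7*c^2 + 4*lam^8 - 8*lam^8*c + 4*lam^8*c^2) : ℝ) := by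
    have h' : ((Complex.normSq ((1 - 4*(lam:ℂ) + 6*(lam:ℂ)^2 - 4*(lam:ℂ)^3 + (lam:ℂ)^4) + (-(2*(lam:ℂ)) + 4*(lam:ℂ)^3 - 2*(lam:ℂ)^4)*e + (lam:ℂ)^4*e^2) : ℝ) : ℂ) = (((1 - 8*lam - 4*lam*c + 32*lam^2 + 16*lam^2*c - 56*lam^3 - 16*lam^3*c + 52*lam^4 - 20*lam^4*c + 4*lam^4*c^2 - 40*lam^5 + 56*lam^5*c - 16*lam^5*c^2 + 32*lam^6 - 56*lam^6*c + 24*lam^6*c^2 - 16*lam^7 + 32*lam^7*c - 16*lam^7*c^2 + 4*lam^8 - 8*lam^8*c + 4*lam^8*c^2) : ℝ) : ℂ) := by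
      rw [← Complex.mul_conj, hconjD]
      exact idD lam c e hquad
    exact_mod_cast h'
  have hUnorm : Complex.normSq ((starRingEnd ℂ) ((2 - 4*(lam:ℂ) + 2*(lam:ℂ)^3) + (-(2*(lam:ℂ)) + 6*(lam:ℂ)^2 - 2*(lam:ℂ)^3)*e) * ((1 - 4*(lam:ℂ) + 6*(lam:ℂ)^2 - 4*(lam:ℂ)^3 + (lam:ℂ)^4) + (-(2*(lam:ℂ)) + 4*(lam:ℂ)^3 - 2*(lam:ℂ)^4)*e + (lam:ℂ)^4*e^2) - ((2 - 4*(lam:ℂ) + 2*(lam:ℂ)^3) + (-(2*(lam:ℂ)) + 6*(lam:ℂ)^2 - 2*(lam:ℂ)^3)*e)) = ((64*lam^2 + 64*lam^2*c + 16*lam^2*c^2 - 512*lam^3 - 512*lam^3*c - 128*lam^3*c^2 + 1872*lam^4 + 1824*lam^4*c + 336*lam^4*c^2 - 4032*lam^5 - 3680*lam^5*c - 32*lam^5*c^2 - 32*lam^5*c^3 + 5680*lam^6 + 4480*lam^6*c - 1808*lam^6*c^2 + 288*lam^6*c^3 - 5696*lam^7 - 3104*lam^7*c + 4672*lam^7*c^2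 - 1056*lam^7*c^3 + 4640*lam^8 + 416*lam^8*c - 5776*lam^8*c^2 + 2016*lam^8*c^3 - 3552*lam^9 + 2176*lam^9*c + 3424*lam^9*c^2 - 2048*lam^9*c^3 + 2576*lam^10 - 3744*lam^10*c + 336*lam^10*c^2 + 832*lam^10*c^3 - 1600*lam^11 + 3552*lam^11*c - 2304*lam^11*c^2 + 352*lam^11*c^3 + 752*lam^12 - 2048*lam^12*c + 1840*lam^12*c^2 - 544*lam^12*c^3 - 224*lam^13 + 672*lam^13*c - 672*lam^13*c^2 + 224*lam^13*c^3 + 32*lam^14 - 96*lam^14*c + 96*lam^14*c^2 - 32*lam^14*c^3) : ℝ) := by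
    have h' : ((Complex.normSq ((starRingEnd ℂ) ((2 - 4*(lam:ℂ) + 2*(lam:ℂ)^3) + (-(2*(lam:ℂ)) + 6*(lam:ℂ)^2 - 2*(lam:ℂ)^3)*e) * ((1 - 4*(lam:ℂ) + 6*(lam:ℂ)^2 - 4*(lam:ℂ)^3 + (lam:ℂ)^4) + (-(2*(lam:ℂ)) + 4*(lam:ℂ)^3 - 2*(lam:ℂ)^4)*e + (lam:ℂ)^4*e^2) - ((2 - 4*(lam:ℂ) + 2*(lam:ℂ)^3) + (-(2*(lam:ℂ)) + 6*(lam:ℂ)^2 - 2*(lam:ℂ)^3)*e)) : ℝ) : ℂ)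
        = (((64*lam^2 + 64*lam^2*c + 16*lam^2*c^2 - 512*lam^3 - 512*lam^3*c - 128*lam^3*c^2 + 1872*lam^4 + 1824*lam^4*c + 336*lam^4*c^2 - 4032*lam^5 - 3680*lam^5*c - 32*lam^5*c^2 - 32*lam^5*c^3 + 5680*lam^6 + 4480*lam^6*c - 1808*lam^6*c^2 + 288*lam^6*c^3 - 5696*lam^7 - 3104*lam^7*c + 4672*lam^7*c^2 - 1056*lam^7*c^3 + 4640*lam^8 + 416*lam^8*c - 5776*lam^8*c^2 + 2016*lam^8*c^3 - 3552*lam^9 + 2176*lam^9*c + 3424*lam^9*c^2 - 2048*lam^9*c^3 + 2576*lam^10 - 3744*lam^10*c + 336*lam^10*c^2 + 832*lam^10*c^3 - 1600*lam^11 + 3552*lam^11*c - 2304*lam^11*c^2 + 352*lam^11*c^3 + 752*lam^12 - 2048*lam^12*c + 1840*lam^12*c^2 - 544*lam^12*c^3 - 224*lam^13 + 672*lam^13*c - 672*lam^13*c^2 + 224*lam^13*c^3 + 32*lam^14 - 96*lam^14*c + 96*lam^14*c^2 - 32*lam^14*c^3) : ℝ) : ℂ) := by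
      rw [← Complex.mul_conj, map_sub, map_mul, Complex.conj_conj, hconjT, hconjD]
      exact idU lam c e hquad
    exact_mod_cast h'
  have habs := abs_bounds (‖(1 - 4*(lam:ℂ) + 6*(lam:ℂ)^2 - 4*(lam:ℂ)^3 + (lam:ℂ)^4) + (-(2*(lam:ℂ)) + 4*(lam:ℂ)^3 - 2*(lam:ℂ)^4)*e + (lam:ℂ)^4*e^2‖)
    (‖(starRingEnd ℂ) ((2 - 4*(lam:ℂ) + 2*(lam:ℂ)^3) + (-(2*(lam:ℂ)) + 6*(lam:ℂ)^2 - 2*(lam:ℂ)^3)*e) * ((1 - 4*(lam:ℂ) + 6*(lam:ℂ)^2 - 4*(lam:ℂ)^3 + (lam:ℂ)^4) + (-(2*(lam:ℂ)) + 4*(lam:ℂ)^3 - 2*(lam:ℂ)^4)*e + (lam:ℂ)^4*e^2) - ((2 - 4*(lam:ℂ) + 2*(lam:ℂ)^3) + (-(2*(lam:ℂ)) + 6*(lam:ℂ)^2 - 2*(lam:ℂ)^3)*e)‖) _ _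
    (norm_nonneg _) (norm_nonneg _)
    (by rw [Complex.sq_norm, hDnorm]) (by rw [Complex.sq_norm, hUnorm]) hYlt hMlt
  have hDabs := habs.1
  have hUabs : ‖(starRingEnd ℂ) ((2 - 4*(lam:ℂ) + 2*(lam:ℂ)^3) + (-(2*(lam:ℂ)) + 6*(lam:ℂ)^2 - 2*(lam:ℂ)^3)*e) * ((1 - 4*(lam:ℂ) + 6*(lam:ℂ)^2 - 4*(lam:ℂ)^3 + (lam:ℂ)^4) + (-(2*(lam:ℂ)) + 4*(lam:ℂ)^3 - 2*(lam:ℂ)^4)*e + (lam:ℂ)^4*e^2) - ((2 - 4*(lam:ℂ) + 2*(lam:ℂ)^3) + (-(2*(lam:ℂ)) + 6*(lam:ℂ)^2 - 2*(lam:ℂ)^3)*e)‖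
      < 1 - ‖(1 - 4*(lam:ℂ) + 6*(lam:ℂ)^2 - 4*(lam:ℂ)^3 + (lam:ℂ)^4) + (-(2*(lam:ℂ)) + 4*(lam:ℂ)^3 - 2*(lam:ℂ)^4)*e + (lam:ℂ)^4*e^2‖ ^ 2 := by
    have := habs.2
    rwa [Complex.sq_norm, hDnorm] at this ⊢
  exact schur_quad ((2 - 4*(lam:ℂ) + 2*(lam:ℂ)^3) + (-(2*(lam:ℂ)) + 6*(lam:ℂ)^2 - 2*(lam:ℂ)^3)*e) ((1 - 4*(lam:ℂ) + 6*(lam:ℂ)^2 - 4*(lam:ℂ)^3 + (lam:ℂ)^4) + (-(2*(lam:ℂ)) + 4*(lam:ℂ)^3 - 2*(lam:ℂ)^4)*e + (lam:ℂ)^4*e^2) z hroot hDabs hUabs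
end

section
/- Let c⁻, c⁺ > 0 and α ∈ ℝ. Let u⁻, u⁺ : ℝ × ℝ → ℝ be continuously differentiable functions satisfying ∂ₜu⁻(t,x) + c⁻·∂ₓu⁻(t,x) = 0 and ∂ₜu⁺(t,x) + c⁺·∂ₓu⁺(t,x) = 0 for all (t,x), together with the interface conditions u⁻(t,α) = u⁺(t,α) and c⁻·∂ₓu⁻(t,α) = c⁺·∂ₓu⁺(t,α) for all t. Let x_j ≥ α, Δt > 0 with x_j − c⁺·Δt ≤ α, and set y_j = α + (c⁻/c⁺)·(x_j − α) − c⁻·Δt. Then for every t: u⁺(t + Δt, x_j) = u⁻(t, y_j) and ∂ₓu⁺(t + Δt, x_j) = (c⁻/c⁺)·∂ₓu⁻(t, y_j). -/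
open Function

private lemma partial_t_aux (u : ℝ → ℝ → ℝ) (hu : ContDiff ℝ 1 (uncurry u)) (t x : ℝ) :
    HasDerivAt (fun s => u s x) (fderiv ℝ (uncurry u) (t, x) (1, 0)) t := by
  have h1 : HasDerivAt (fun s : ℝ => (s, x)) ((1 : ℝ), (0 : ℝ)) t :=
    (hasDerivAt_id t).prodMk (hasDerivAt_const t x)
  exact ((hu.differentiable one_ne_zero (t, x)).hasFDerivAt).comp_hasDerivAt t h1

private lemma partial_x_aux (u : ℝ → ℝ → ℝ) (hu : ContDiff ℝ 1 (uncurry u)) (t x : ℝ) :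
    HasDerivAt (fun y => u t y) (fderiv ℝ (uncurry u) (t, x) (0, 1)) x := by
  have h1 : HasDerivAt (fun y : ℝ => (t, y)) ((0 : ℝ), (1 : ℝ)) x :=
    (hasDerivAt_const x t).prodMk (hasDerivAt_id x)
  exact ((hu.differentiable one_ne_zero (t, x)).hasFDerivAt).comp_hasDerivAt x h1

private lemma transport_const (c : ℝ) (u : ℝ → ℝ → ℝ) (hu : ContDiff ℝ 1 (uncurry u))
    (hpde : ∀ t x, deriv (fun s => u s x) t + c * deriv (fun y => u t y) x = 0)
    (t x s : ℝ) : u (t + s) (x + c * s) = u t x := by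
  have key : ∀ r : ℝ, HasDerivAt (fun r => u (t + r) (x + c * r)) 0 r := by
    intro r
    have hL : HasDerivAt (fun r : ℝ => (t + r, x + c * r)) ((1 : ℝ), c) r := by
      have := ((hasDerivAt_id r).const_add t).prodMk
        (((hasDerivAt_id r).const_mul c).const_add x)
      simpa using this
    have h3 := ((hu.differentiable one_ne_zero (t + r, x + c * r)).hasFDerivAt).comp_hasDerivAt r hL
    have e1 : fderiv ℝ (uncurry u) (t + r, x + c * r) (1, c) = 0 := by
      have ht := (partial_t_aux u hu (t + r) (x + c * r)).deriv
      have hx := (partial_x_aux u hu (t + r) (x + c * r)).deriv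
      have hsplit : ((1 : ℝ), c) = ((1 : ℝ), (0 : ℝ)) + c • ((0 : ℝ), (1 : ℝ)) := by simp
      rw [hsplit, map_add, map_smul, smul_eq_mul, ← ht, ← hx]
      exact hpde (t + r) (x + c * r)
    rwa [e1] at h3
  have hconst := is_const_of_deriv_eq_zero (f := fun r => u (t + r) (x + c * r))
    (fun r => (key r).differentiableAt) (fun r => (key r).deriv) s 0
  simpa using hconst

private lemma transport_deriv_const (c : ℝ) (u : ℝ → ℝ → ℝ) (hu : ContDiff ℝ 1 (uncurry u))
    (hpde : ∀ t x, deriv (fun s => u s x) t + c * deriv (fun y => u t y) x = 0)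
    (t x s : ℝ) :
    deriv (fun y => u (t + s) y) (x + c * s) = deriv (fun y => u t y) x := by
  have h : (fun y => u (t + s) (y + c * s)) = (fun y => u t y) :=
    funext fun y => transport_const c u hu hpde t y s
  have h2 := deriv_comp_add_const (fun y => u (t + s) y) (c * s) x
  rw [h] at h2
  exact h2.symm

/-- Exact characteristic update across the interface for the
transport equation with piecewise constant speed (`c⁻` left of `α`, `c⁺` right of `α`)
under the interface conditions `[u] = 0` and `[c u_x] = 0`: if `x_j ≥ α`, `Δt > 0` and
`x_j − c⁺Δt ≤ α`, then with `y_j = α + (c⁻/c⁺)(x_j − α) − c⁻Δt` one has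
`u⁺(t+Δt, x_j) = u⁻(t, y_j)` and `u⁺_x(t+Δt, x_j) = (c⁻/c⁺) u⁻_x(t, y_j)`. -/
theorem stmt_16 (cm cp α : ℝ) (hcm : 0 < cm) (hcp : 0 < cp)
    (um up : ℝ → ℝ → ℝ)
    (hum : ContDiff ℝ 1 (Function.uncurry um))
    (hup : ContDiff ℝ 1 (Function.uncurry up))
    (hpdem : ∀ t x, deriv (fun s => um s x) t + cm * deriv (fun y => um t y) x = 0)
    (hpdep : ∀ t x, deriv (fun s => up s x) t + cp * deriv (fun y => up t y) x = 0)
    (hjump : ∀ t, um t α = up t α)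
    (hflux : ∀ t, cm * deriv (fun y => um t y) α = cp * deriv (fun y => up t y) α)
    (xj Δt yj : ℝ) (hxj : α ≤ xj) (hΔt : 0 < Δt) (hcross : xj - cp * Δt ≤ α)
    (hyj : yj = α + (cm / cp) * (xj - α) - cm * Δt) :
    ∀ t : ℝ, up (t + Δt) xj = um t yj ∧
      deriv (fun x => up (t + Δt) x) xj = (cm / cp) * deriv (fun x => um t x) yj := by
  intro t
  set s1 : ℝ := (xj - α) / cp with hs1
  have hx1 : α + cp * s1 = xj := by
    rw [hs1]; field_simp; ring
  have htime : t + Δt - s1 + s1 = t + Δt := by ring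
  have e2 : yj + cm * (Δt - s1) = α := by
    rw [hyj, hs1]; field_simp; ring
  have e3 : t + (Δt - s1) = t + Δt - s1 := by ring
  have A := transport_const cp up hup hpdep (t + Δt - s1) α s1
  rw [hx1, htime] at A
  have B := transport_const cm um hum hpdem t yj (Δt - s1)
  rw [e2, e3] at B
  have C := transport_deriv_const cp up hup hpdep (t + Δt - s1) α s1
  rw [hx1, htime] at C
  have D := transport_deriv_const cm um hum hpdem t yj (Δt - s1)
  rw [e2, e3] at D
  constructor
  · rw [A, ← hjump (t + Δt - s1)]
    exact B
  · rw [C, ← D]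
    have hf := hflux (t + Δt - s1)
    field_simp
    linarith
end
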